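/- Let F_N be the free group on N ≥ 2 generators and let q_l denote the orthogonal projection of ℓ²(F_N) onto the span of words of length l. For β = ∑_{|w|=1} c_w w with c_w = ε c_{w^{−1}} (ε ∈ {±1}) orthogonal to the subspace S₁ spanned by χ₁, and with β_{r,s} := q_{r+s+1}(χ_r β χ_s) for r, s ≥ 0 (and 0 otherwise), one has for all n, m, n′, m′ ≥ 0: ⟨β_{n,m}, β′_{n′,m′}⟩ = δ_{ε,ε′} δ_{n+m, n′+m′} (2N−1)^{n+m} (−ε(2N−1))^{−|n−n′|} ⟨β, β′⟩, where β′ is another such vector with sign ε′. -/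

import Mathlib

open FreeGroup List

variable {N : ℕ}

/-- non-cancellation relation between adjacent letters of a reduced word -/
def rr (a b : Fin N × Bool) : Prop := ¬(a.1 = b.1 ∧ a.2 = !b.2)

instance : DecidableRel (rr (N := N)) := fun a b => by unfold rr; infer_instance

lemma rr_symm {a b : Fin N × Bool} (h : rr a b) : rr b a := by
  unfold rr at *
  rintro ⟨h1, h2⟩
  exact h ⟨h1.symm, by simp [h2]⟩

lemma chain'_reduce : ∀ l : List (Fin N × Bool), List.IsChain rr (FreeGroup.reduce l)
  | [] => List.IsChain.nil
  | x :: xs => by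
    have ih := chain'_reduce xs
    rw [FreeGroup.reduce.cons]
    rcases h : FreeGroup.reduce xs with _ | ⟨y, ys⟩
    · simp
    · rw [h] at ih
      by_cases hc : x.1 = y.1 ∧ x.2 = !y.2
      · simpa [hc] using ih.tail
      · simpa [hc] using List.isChain_cons_cons.mpr ⟨hc, ih⟩

lemma reduce_eq_self : ∀ {l : List (Fin N × Bool)}, List.IsChain rr l → FreeGroup.reduce l = l
  | [], _ => rfl
  | x :: xs, h => by
    have ih : FreeGroup.reduce xs = xs := reduce_eq_self (by simpa using h.tail)
    rw [FreeGroup.reduce.cons, ih]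
    cases xs with
    | nil => rfl
    | cons y ys =>
      have hy := (List.isChain_cons_cons.mp h).1
      unfold rr at hy
      simp [hy]

lemma toWord_mk_of_chain {l : List (Fin N × Bool)} (h : List.IsChain rr l) :
    (FreeGroup.mk l).toWord = l := by rw [toWord_mk, reduce_eq_self h]

lemma chain'_toWord (w : FreeGroup (Fin N)) : List.IsChain rr w.toWord := by
  have := chain'_reduce (N := N) w.toWord
  rwa [reduce_toWord] at this

lemma length_mul_le' (x y : FreeGroup (Fin N)) :
    (x * y).toWord.length ≤ x.toWord.length + y.toWord.length := by
  simpa using (toWord_mul_sublist x y).length_le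

lemma toWord_mul_of_length {x y : FreeGroup (Fin N)}
    (h : (x * y).toWord.length = x.toWord.length + y.toWord.length) :
    (x * y).toWord = x.toWord ++ y.toWord :=
  (toWord_mul_sublist x y).eq_of_length (by simp [h])
lemma conv_apply (f g : MonoidAlgebra ℂ (FreeGroup (Fin N))) (r s : ℕ)
    (hf : ∀ a, f.coeff a ≠ 0 → a.toWord.length ≤ r) (hg : ∀ b, g.coeff b ≠ 0 → b.toWord.length ≤ s)
    (w : FreeGroup (Fin N)) (hw : w.toWord.length = r + s) :
    (f * g).coeff w = f.coeff (FreeGroup.mk (w.toWord.take r)) * g.coeff (FreeGroup.mk (w.toWord.drop r)) := by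
  classical
  set a₀ := FreeGroup.mk (w.toWord.take r) with ha₀
  set b₀ := FreeGroup.mk (w.toWord.drop r) with hb₀
  have hkey : ∀ a b : FreeGroup (Fin N), f.coeff a ≠ 0 → g.coeff b ≠ 0 → a * b = w →
      a = a₀ ∧ b = b₀ := by
    intro a b hfa hgb hab
    have h1 := hf a hfa
    have h2 := hg b hgb
    have h3 : (a * b).toWord.length ≤ a.toWord.length + b.toWord.length := length_mul_le' a b
    rw [hab, hw] at h3
    have h4 : a.toWord.length = r := by omega
    have h4' : b.toWord.length = s := by omega
    have h5 : w.toWord = a.toWord ++ b.toWord := by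
      rw [← hab]
      exact toWord_mul_of_length (by rw [hab, hw, h4, h4'])
    constructor
    · rw [ha₀, h5, List.take_left' h4, mk_toWord]
    · rw [hb₀, h5, List.drop_left' h4, mk_toWord]
  rw [MonoidAlgebra.mul_apply]
  rw [Finsupp.sum_eq_single a₀ ?hout ?hzero]
  · rw [Finsupp.sum_eq_single b₀ ?hin ?hzero2]
    · have : a₀ * b₀ = w := by rw [ha₀, hb₀, mul_mk, List.take_append_drop, mk_toWord]
      rw [if_pos this]
    case hin =>
      intro b hgb hbne
      by_cases hfa : f.coeff a₀ = 0
      · simp [hfa]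
      by_cases hab : a₀ * b = w
      · exact absurd (hkey a₀ b hfa hgb hab).2 hbne
      · rw [if_neg hab]
    case hzero2 => simp
  case hout =>
    intro a hfa hane
    rw [Finsupp.sum]
    apply Finset.sum_eq_zero
    intro b hgb
    by_cases hab : a * b = w
    · exact absurd (hkey a b hfa (Finsupp.mem_support_iff.mp hgb) hab).1 hane
    · rw [if_neg hab]
  case hzero =>
    intro _
    rw [Finsupp.sum]
    apply Finset.sum_eq_zero
    intro b hgb
    split <;> simp
def allW (N : ℕ) : ℕ → Finset (List (Fin N × Bool))
  | 0 => {[]}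
  | k + 1 => ((Finset.univ : Finset (Fin N × Bool)) ×ˢ allW N k).image fun p => p.1 :: p.2

lemma mem_allW {k : ℕ} : ∀ {l : List (Fin N × Bool)}, l ∈ allW N k ↔ l.length = k := by
  induction k with
  | zero => intro l; simp [allW, List.length_eq_zero_iff]
  | succ k ih =>
    intro l
    constructor
    · intro hl
      simp only [allW, Finset.mem_image] at hl
      obtain ⟨p, hp, rfl⟩ := hl
      simp only [Finset.mem_product] at hp
      simp [ih.mp hp.2]
    · intro hl
      cases l with
      | nil => simp at hl
      | cons x xs =>
        simp only [allW, Finset.mem_image]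
        exact ⟨(x, xs), by simp [Finset.mem_product, ih, List.length_cons] at hl ⊢; omega, rfl⟩

def RWs (N k : ℕ) : Finset (List (Fin N × Bool)) :=
  (allW N k).filter fun l => List.IsChain rr l

lemma mem_RWs {k : ℕ} {l : List (Fin N × Bool)} :
    l ∈ RWs N k ↔ l.length = k ∧ List.IsChain rr l := by
  simp [RWs, mem_allW, Finset.mem_filter]

lemma sum_RWs_succ (x₀ : Fin N × Bool) (k : ℕ) (hk : 1 ≤ k) (F : List (Fin N × Bool) → ℂ) :
    ∑ l ∈ RWs N (k + 1), F l
      = ∑ u ∈ RWs N k, ∑ g ∈ Finset.univ.filter (fun g => rr g (u.getD 0 x₀)), F (g :: u) := by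
  have hR : ∑ u ∈ RWs N k, ∑ g ∈ Finset.univ.filter (fun g => rr g (u.getD 0 x₀)), F (g :: u)
      = ∑ p ∈ (RWs N k ×ˢ (Finset.univ : Finset (Fin N × Bool))).filter
          (fun p => rr p.2 (p.1.getD 0 x₀)), F (p.2 :: p.1) := by
    rw [Finset.sum_filter, Finset.sum_product]
    refine Finset.sum_congr rfl fun u _ => ?_
    rw [Finset.sum_filter]
  rw [hR]
  apply Finset.sum_nbij' (i := fun l => (l.tail, l.getD 0 x₀)) (j := fun p => p.2 :: p.1)
  · intro l hl
    rw [mem_RWs] at hl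
    obtain ⟨hlen, hch⟩ := hl
    cases l with
    | nil => simp at hlen
    | cons a u =>
      cases u with
      | nil => simp at hlen; omega
      | cons h t =>
        simp only [Finset.mem_filter, Finset.mem_product, Finset.mem_univ, and_true,
          List.tail_cons, List.getD_cons_zero]
        refine ⟨?_, (List.isChain_cons_cons.mp hch).1⟩
        rw [mem_RWs]
        exact ⟨by simpa using hlen, (List.isChain_cons_cons.mp hch).2⟩
  · intro p hp
    obtain ⟨u, g⟩ := p
    simp only [Finset.mem_filter, Finset.mem_product, Finset.mem_univ, and_true] at hp
    obtain ⟨hp1, hp2⟩ := hp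
    rw [mem_RWs] at hp1 ⊢
    obtain ⟨hlen, hch⟩ := hp1
    refine ⟨by simp [hlen], ?_⟩
    cases u with
    | nil => simp at hlen; omega
    | cons h t => exact List.isChain_cons_cons.mpr ⟨by simpa using hp2, hch⟩
  · intro l hl
    rw [mem_RWs] at hl
    cases l with
    | nil => simp at hl
    | cons a u => simp
  · intro p _; simp
  · intro l hl
    rw [mem_RWs] at hl
    cases l with
    | nil => simp at hl
    | cons a u => simp

lemma card_rr (hN : 0 < N) (h : Fin N × Bool) :
    (Finset.univ.filter fun g => rr g h).card = 2 * N - 1 := by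
  have hsing : (Finset.univ.filter fun g : Fin N × Bool => ¬ rr g h) = {(h.1, !h.2)} := by
    ext g
    simp only [Finset.mem_filter, Finset.mem_univ, true_and, Finset.mem_singleton, rr, not_not]
    constructor
    · rintro ⟨h1, h2⟩; exact Prod.ext h1 h2
    · rintro rfl; exact ⟨rfl, rfl⟩
  have hcard := Finset.card_filter_add_card_filter_not
    (s := (Finset.univ : Finset (Fin N × Bool))) (p := fun g => rr g h)
  rw [hsing] at hcard
  simp only [Finset.card_singleton, Finset.card_univ, Fintype.card_prod, Fintype.card_fin,
    Fintype.card_bool] at hcard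
  omega

lemma sum_rr_filter (cc : Fin N × Bool → ℂ) (hc0 : ∑ g, cc g = 0) (h : Fin N × Bool) :
    ∑ g ∈ Finset.univ.filter (fun g => rr g h), cc g = -cc (h.1, !h.2) := by
  have hsing : (Finset.univ.filter fun g : Fin N × Bool => ¬ rr g h) = {(h.1, !h.2)} := by
    ext g
    simp only [Finset.mem_filter, Finset.mem_univ, true_and, Finset.mem_singleton, rr, not_not]
    constructor
    · rintro ⟨h1, h2⟩; exact Prod.ext h1 h2
    · rintro rfl; exact ⟨rfl, rfl⟩
  have := Finset.sum_filter_add_sum_filter_not Finset.univ (fun g => rr g h) cc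
  rw [hsing, Finset.sum_singleton, hc0] at this
  linear_combination this

lemma chain'_reverse_iff {l : List (Fin N × Bool)} :
    List.IsChain rr l.reverse ↔ List.IsChain rr l := by
  rw [List.isChain_reverse]
  exact ⟨fun h => h.imp fun a b => rr_symm, fun h => h.imp fun a b => rr_symm⟩

lemma sum_RWs_reverse (k : ℕ) (F : List (Fin N × Bool) → ℂ) :
    ∑ l ∈ RWs N k, F l = ∑ l ∈ RWs N k, F l.reverse := by
  apply Finset.sum_nbij' (i := fun l => List.reverse l) (j := fun l => List.reverse l)
  · intro l hl; rw [mem_RWs] at hl ⊢; simpa [chain'_reverse_iff] using hl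
  · intro l hl; rw [mem_RWs] at hl ⊢; simpa [chain'_reverse_iff] using hl
  · intro l _; simp
  · intro l _; simp
  · intro l _; simp

lemma getD_reverse' {l : List (Fin N × Bool)} {i : ℕ} (h : i < l.length) (x₀ : Fin N × Bool) :
    l.reverse.getD i x₀ = l.getD (l.length - 1 - i) x₀ := by
  rw [List.getD_eq_getElem _ _ (by simpa using h), List.getD_eq_getElem _ _ (by omega),
    List.getElem_reverse]
noncomputable def Tsum (N : ℕ) (x₀ : Fin N × Bool) (cc dd : Fin N × Bool → ℂ) (a d b : ℕ) : ℂ :=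
  ∑ l ∈ RWs N (a + d + 1 + b), cc (l.getD a x₀) * dd (l.getD (a + d) x₀)

variable (x₀ : Fin N × Bool) (cc dd : Fin N × Bool → ℂ)

lemma Tsum_succ_left (hN : 0 < N) (a d b : ℕ) :
    Tsum N x₀ cc dd (a+1) d b = ((2*N-1 : ℕ) : ℂ) * Tsum N x₀ cc dd a d b := by
  unfold Tsum
  rw [show a+1+d+1+b = (a+d+1+b)+1 from by omega,
    sum_RWs_succ x₀ _ (by omega) (fun l => cc (l.getD (a+1) x₀) * dd (l.getD (a+1+d) x₀)),
    Finset.mul_sum]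
  refine Finset.sum_congr rfl fun u hu => ?_
  have hg : ∀ g : Fin N × Bool,
      cc ((g :: u).getD (a+1) x₀) * dd ((g :: u).getD (a+1+d) x₀)
        = cc (u.getD a x₀) * dd (u.getD (a+d) x₀) := by
    intro g
    rw [show a+1+d = (a+d)+1 from by omega, List.getD_cons_succ, List.getD_cons_succ]
  rw [Finset.sum_congr rfl fun g _ => hg g, Finset.sum_const, card_rr hN, nsmul_eq_mul]

lemma Tsum_swap (a d b : ℕ) :
    ∑ l ∈ RWs N (a + d + 1 + b), cc (l.getD (a + d) x₀) * dd (l.getD a x₀)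
      = Tsum N x₀ cc dd b d a := by
  unfold Tsum
  rw [sum_RWs_reverse _ (fun l => cc (l.getD (a+d) x₀) * dd (l.getD a x₀)),
    show a+d+1+b = b+d+1+a from by omega]
  refine Finset.sum_congr rfl fun l hl => ?_
  rw [mem_RWs] at hl
  have e1 : l.length - 1 - (a+d) = b := by omega
  have e2 : l.length - 1 - a = b+d := by omega
  rw [getD_reverse' (by omega) x₀, getD_reverse' (by omega) x₀, e1, e2]

lemma Tsum_succ_right (hN : 0 < N) (a d b : ℕ) :
    Tsum N x₀ cc dd a d (b+1) = ((2*N-1 : ℕ) : ℂ) * Tsum N x₀ cc dd a d b := by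
  have h1 : Tsum N x₀ cc dd a d (b+1)
      = ∑ l ∈ RWs N ((a+d+1+b)+1), cc (l.getD (d+b+1) x₀) * dd (l.getD (b+1) x₀) := by
    unfold Tsum
    rw [sum_RWs_reverse _ (fun l => cc (l.getD a x₀) * dd (l.getD (a+d) x₀)),
      show a+d+1+(b+1) = (a+d+1+b)+1 from by omega]
    refine Finset.sum_congr rfl fun l hl => ?_
    rw [mem_RWs] at hl
    have e1 : l.length - 1 - a = d+b+1 := by omega
    have e2 : l.length - 1 - (a+d) = b+1 := by omega
    rw [getD_reverse' (by omega) x₀, getD_reverse' (by omega) x₀, e1, e2]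
  have h2 : ∑ l ∈ RWs N (a+d+1+b), cc (l.getD (d+b) x₀) * dd (l.getD b x₀)
      = Tsum N x₀ cc dd a d b := by
    have := Tsum_swap (N := N) x₀ cc dd b d a
    rw [show b+d+1+a = a+d+1+b from by omega, show b+d = d+b from by omega] at this
    exact this
  rw [h1, sum_RWs_succ x₀ _ (by omega) (fun l => cc (l.getD (d+b+1) x₀) * dd (l.getD (b+1) x₀)),
    ← h2, Finset.mul_sum]
  refine Finset.sum_congr rfl fun u hu => ?_
  have hg : ∀ g : Fin N × Bool,
      cc ((g :: u).getD (d+b+1) x₀) * dd ((g :: u).getD (b+1) x₀)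
        = cc (u.getD (d+b) x₀) * dd (u.getD b x₀) := by
    intro g
    rw [List.getD_cons_succ, List.getD_cons_succ]
  rw [Finset.sum_congr rfl fun g _ => hg g, Finset.sum_const, card_rr hN, nsmul_eq_mul]

lemma Tsum_succ_d (hc0 : ∑ g, cc g = 0) (e : ℂ)
    (hcsym : ∀ g : Fin N × Bool, cc (g.1, !g.2) = e * cc g) (d : ℕ) :
    Tsum N x₀ cc dd 0 (d+1) 0 = (-e) * Tsum N x₀ cc dd 0 d 0 := by
  unfold Tsum
  simp only [Nat.zero_add, Nat.add_zero]
  rw [sum_RWs_succ x₀ _ (by omega) (fun l => cc (l.getD 0 x₀) * dd (l.getD (d+1) x₀)),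
    Finset.mul_sum]
  refine Finset.sum_congr rfl fun u hu => ?_
  have hg : ∀ g : Fin N × Bool,
      cc ((g :: u).getD 0 x₀) * dd ((g :: u).getD (d+1) x₀)
        = cc g * dd (u.getD d x₀) := by
    intro g
    rw [List.getD_cons_zero, List.getD_cons_succ]
  rw [Finset.sum_congr rfl fun g _ => hg g, ← Finset.sum_mul,
    sum_rr_filter cc hc0 (u.getD 0 x₀), hcsym]
  ring

lemma RWs_one : RWs N 1 = Finset.univ.image (fun g : Fin N × Bool => [g]) := by
  ext l
  rw [mem_RWs]
  simp only [Finset.mem_image, Finset.mem_univ, true_and]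
  constructor
  · rintro ⟨h1, -⟩
    obtain ⟨g, rfl⟩ := List.length_eq_one_iff.mp h1
    exact ⟨g, rfl⟩
  · rintro ⟨g, rfl⟩
    exact ⟨rfl, List.isChain_singleton g⟩

lemma Tsum_base : Tsum N x₀ cc dd 0 0 0 = ∑ g, cc g * dd g := by
  unfold Tsum
  rw [show 0+0+1+0 = 1 from rfl, RWs_one,
    Finset.sum_image (by intro g _ g' _ h; simpa using h)]
  rfl

lemma Tsum_eval (hN : 0 < N) (hc0 : ∑ g, cc g = 0) (e : ℂ)
    (hcsym : ∀ g : Fin N × Bool, cc (g.1, !g.2) = e * cc g) (a d b : ℕ) :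
    Tsum N x₀ cc dd a d b
      = ((2*N-1 : ℕ) : ℂ) ^ (a + b) * (-e) ^ d * ∑ g, cc g * dd g := by
  induction a with
  | succ a ih => rw [Tsum_succ_left x₀ cc dd hN, ih]; ring
  | zero =>
    induction b with
    | succ b ih => rw [Tsum_succ_right x₀ cc dd hN, ih]; ring
    | zero =>
      induction d with
      | zero => rw [Tsum_base]; ring
      | succ d ih => rw [Tsum_succ_d x₀ cc dd hc0 e hcsym, ih]; ring
lemma chain'_take {l : List (Fin N × Bool)} (h : List.IsChain rr l) (n : ℕ) :
    List.IsChain rr (l.take n) := h.take n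

lemma middle_apply (x₀ : Fin N × Bool)
    (chi : ℕ → MonoidAlgebra ℂ (FreeGroup (Fin N)))
    (hchi : ∀ n, ∀ w : FreeGroup (Fin N),
      (chi n).coeff w = if (FreeGroup.toWord w).length = n then 1 else 0)
    (bb : MonoidAlgebra ℂ (FreeGroup (Fin N)))
    (hbb : ∀ v : FreeGroup (Fin N), (FreeGroup.toWord v).length ≠ 1 → bb.coeff v = 0)
    (r s : ℕ) (w : FreeGroup (Fin N)) (hw : w.toWord.length = r + s + 1) :
    (chi r * bb * chi s).coeff w = bb.coeff (FreeGroup.mk [w.toWord.getD r x₀]) := by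
  have hchain := chain'_toWord w
  have hchilen : ∀ (t : ℕ) (a : FreeGroup (Fin N)), (chi t).coeff a ≠ 0 → a.toWord.length ≤ t := by
    intro t a ha
    by_contra hlt
    exact ha (by rw [hchi]; exact if_neg (by omega))
  have hbblen : ∀ v : FreeGroup (Fin N), bb.coeff v ≠ 0 → v.toWord.length ≤ 1 := by
    intro v hv
    by_contra hlt
    exact hv (hbb v (by omega))
  have h1 : ∀ a : FreeGroup (Fin N), (chi r * bb).coeff a ≠ 0 → a.toWord.length ≤ r + 1 := by
    intro a ha
    have hmem : a ∈ ((chi r * bb).coeff.support : Finset (FreeGroup (Fin N))) :=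
      Finsupp.mem_support_iff.mpr ha
    have hmem2 := MonoidAlgebra.support_coeff_mul_subset (chi r) bb hmem
    obtain ⟨x, hx, y, hy, rfl⟩ := Finset.mem_mul.mp hmem2
    have hx' := hchilen r x (Finsupp.mem_support_iff.mp hx)
    have hy' := hbblen y (Finsupp.mem_support_iff.mp hy)
    calc (x * y).toWord.length ≤ x.toWord.length + y.toWord.length := length_mul_le' x y
      _ ≤ r + 1 := by omega
  have hA : (chi r * bb * chi s).coeff w
      = (chi r * bb).coeff (FreeGroup.mk (w.toWord.take (r+1)))
          * (chi s).coeff (FreeGroup.mk (w.toWord.drop (r+1))) :=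
    conv_apply (chi r * bb) (chi s) (r+1) s h1 (hchilen s) w (by omega)
  have hdrop : (FreeGroup.mk (w.toWord.drop (r+1))).toWord = w.toWord.drop (r+1) :=
    toWord_mk_of_chain (hchain.drop _)
  have hchiS : (chi s).coeff (FreeGroup.mk (w.toWord.drop (r+1))) = 1 := by
    rw [hchi]
    rw [if_pos (by rw [hdrop, List.length_drop, hw]; omega)]
  have htw1 : (FreeGroup.mk (w.toWord.take (r+1))).toWord = w.toWord.take (r+1) :=
    toWord_mk_of_chain (hchain.take _)
  have hlen1 : (FreeGroup.mk (w.toWord.take (r+1))).toWord.length = r + 1 := by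
    rw [htw1, List.length_take]; omega
  have hB : (chi r * bb).coeff (FreeGroup.mk (w.toWord.take (r+1)))
      = (chi r).coeff (FreeGroup.mk (((FreeGroup.mk (w.toWord.take (r+1))).toWord).take r))
          * bb.coeff (FreeGroup.mk (((FreeGroup.mk (w.toWord.take (r+1))).toWord).drop r)) :=
    conv_apply (chi r) bb r 1 (hchilen r) hbblen _ (by omega)
  have htake_take : ((FreeGroup.mk (w.toWord.take (r+1))).toWord).take r = w.toWord.take r := by
    rw [htw1, List.take_take, min_eq_left (by omega)]
  have hchiR : (chi r).coeff (FreeGroup.mk (((FreeGroup.mk (w.toWord.take (r+1))).toWord).take r)) = 1 := by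
    rw [htake_take, hchi]
    rw [if_pos (by rw [toWord_mk_of_chain (hchain.take _), List.length_take]; omega)]
  have hrlt : r < w.toWord.length := by omega
  have hdrop_take : ((FreeGroup.mk (w.toWord.take (r+1))).toWord).drop r
      = [w.toWord.getD r x₀] := by
    rw [htw1, List.drop_take, show r+1-r = 1 from by omega,
      List.take_one_drop_eq_of_lt_length hrlt, List.getD_eq_getElem _ _ hrlt]
    simp
  rw [hA, hchiS, hB, hchiR, hdrop_take, one_mul, mul_one]
lemma finisher (hN : 2 ≤ N) (ε ε' : ℝ) (hε : ε = 1 ∨ ε = -1) (ip : ℂ)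
    (hipz : ε ≠ ε' → ip = 0) (d e1 nm : ℕ) (hde : d + e1 = nm) :
    ((2*N-1 : ℕ) : ℂ) ^ e1 * (-(ε:ℂ)) ^ d * ip
      = (if ε = ε' then 1 else 0) * (1:ℂ) * (2*(N:ℂ)-1) ^ nm
          * ((-(ε:ℂ) * (2*(N:ℂ)-1)) ^ (-(d:ℤ))) * ip := by
  by_cases hee : ε = ε'
  · rw [if_pos hee]
    have hK : (2*(N:ℂ)-1) = ((2*N-1 : ℕ) : ℂ) := by
      push_cast [Nat.cast_sub (by omega : 1 ≤ 2*N)]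
      ring
    rw [hK, zpow_neg, zpow_natCast]
    have hKne : ((2*N-1 : ℕ) : ℂ) ≠ 0 := Nat.cast_ne_zero.mpr (by omega)
    have hε2 : (-(ε:ℂ)) * (-(ε:ℂ)) = 1 := by rcases hε with rfl | rfl <;> norm_num
    have hinv : ((-(ε:ℂ) * ((2*N-1:ℕ):ℂ)) ^ d)⁻¹
        = (-(ε:ℂ)) ^ d * (((2*N-1:ℕ):ℂ) ^ d)⁻¹ := by
      rw [mul_pow, mul_inv]
      congr 1
      exact inv_eq_of_mul_eq_one_right (by rw [← mul_pow, hε2, one_pow])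
    rw [hinv]
    have hpow : ((2*N-1:ℕ):ℂ) ^ nm = ((2*N-1:ℕ):ℂ) ^ e1 * ((2*N-1:ℕ):ℂ) ^ d := by
      rw [← pow_add]
      congr 1
      omega
    rw [hpow]
    have hpne : ((2*N-1:ℕ):ℂ) ^ d ≠ 0 := pow_ne_zero _ hKne
    have hcancel : ((2*N-1:ℕ):ℂ) ^ d * (((2*N-1:ℕ):ℂ) ^ d)⁻¹ = 1 := mul_inv_cancel₀ hpne
    linear_combination (-(((2*N-1:ℕ):ℂ) ^ e1) * (-(ε:ℂ)) ^ d * ip) * hcancel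
  · rw [if_neg hee, hipz hee]
    ring

/-- Rădulescu's inner product formula: for `β, β'` of length one with symmetry signs
`ε, ε'` and orthogonal to `χ₁`, with `β_{r,s} = q_{r+s+1}(χ_r β χ_s)`,
`⟨β_{n,m}, β'_{n',m'}⟩ = δ_{ε,ε'} δ_{n+m,n'+m'} (2N-1)^{n+m} (-ε(2N-1))^{-|n-n'|} ⟨β,β'⟩`. -/
theorem stmt_12 (N : ℕ) (hN : 2 ≤ N)
    (chi : ℕ → MonoidAlgebra ℂ (FreeGroup (Fin N)))
    (hchi : ∀ n, ∀ w : FreeGroup (Fin N),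
      (chi n).coeff w = if (FreeGroup.toWord w).length = n then 1 else 0)
    (q : ℕ → MonoidAlgebra ℂ (FreeGroup (Fin N)) → MonoidAlgebra ℂ (FreeGroup (Fin N)))
    (hq : ∀ l f (w : FreeGroup (Fin N)),
      (q l f).coeff w = if (FreeGroup.toWord w).length = l then f.coeff w else 0)
    (ε ε' : ℝ) (hε : ε = 1 ∨ ε = -1) (hε' : ε' = 1 ∨ ε' = -1)
    (β β' : MonoidAlgebra ℂ (FreeGroup (Fin N)))
    (hβlen : ∀ w : FreeGroup (Fin N), (FreeGroup.toWord w).length ≠ 1 → β.coeff w = 0)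
    (hβ'len : ∀ w : FreeGroup (Fin N), (FreeGroup.toWord w).length ≠ 1 → β'.coeff w = 0)
    (hβsym : ∀ w : FreeGroup (Fin N), β.coeff w = (ε : ℂ) * β.coeff w⁻¹)
    (hβ'sym : ∀ w : FreeGroup (Fin N), β'.coeff w = (ε' : ℂ) * β'.coeff w⁻¹)
    (hβorth : (β.coeff.sum fun w a => a * (starRingEnd ℂ) ((chi 1).coeff w)) = 0)
    (hβ'orth : (β'.coeff.sum fun w a => a * (starRingEnd ℂ) ((chi 1).coeff w)) = 0)
    (B B' : ℤ → ℤ → MonoidAlgebra ℂ (FreeGroup (Fin N)))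
    (hB : ∀ r s : ℕ, B r s = q (r + s + 1) (chi r * β * chi s))
    (hB' : ∀ r s : ℕ, B' r s = q (r + s + 1) (chi r * β' * chi s))
    (hB0 : ∀ r s : ℤ, r < 0 ∨ s < 0 → B r s = 0)
    (hB'0 : ∀ r s : ℤ, r < 0 ∨ s < 0 → B' r s = 0)
    (n m n' m' : ℕ) :
    ((B n m).coeff.sum fun w a => a * (starRingEnd ℂ) ((B' n' m').coeff w)) =
      (if ε = ε' then 1 else 0) * (if n + m = n' + m' then 1 else 0) *
        (2 * N - 1 : ℂ) ^ (n + m) *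
        ((-(ε : ℂ) * (2 * N - 1)) ^ (-|(n : ℤ) - (n' : ℤ)|)) *
        (β.coeff.sum fun w a => a * (starRingEnd ℂ) (β'.coeff w)) := by
  classical
  have hN0 : 0 < N := by omega
  set x₀ : Fin N × Bool := (⟨0, hN0⟩, true) with hx₀
  set cc : Fin N × Bool → ℂ := fun g => β.coeff (FreeGroup.mk [g]) with hcc
  set cc' : Fin N × Bool → ℂ := fun g => β'.coeff (FreeGroup.mk [g]) with hcc'
  set dd : Fin N × Bool → ℂ := fun g => (starRingEnd ℂ) (cc' g) with hdd
  have hsingle : ∀ g : Fin N × Bool, (FreeGroup.mk [g]).toWord = [g] :=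
    fun g => toWord_mk_of_chain (List.isChain_singleton g)
  have hmkinj : ∀ g g' : Fin N × Bool, FreeGroup.mk [g] = FreeGroup.mk [g'] → g = g' := by
    intro g g' h
    have h2 := congrArg FreeGroup.toWord h
    rw [hsingle, hsingle] at h2
    simpa using h2
  have hsum1 : ∀ γ : MonoidAlgebra ℂ (FreeGroup (Fin N)),
      (∀ v : FreeGroup (Fin N), v.toWord.length ≠ 1 → γ.coeff v = 0) →
      ∀ F : FreeGroup (Fin N) → ℂ → ℂ, (∀ w, F w 0 = 0) →
      γ.coeff.sum F = ∑ g : Fin N × Bool, F (FreeGroup.mk [g]) (γ.coeff (FreeGroup.mk [g])) := by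
    intro γ hγ F hF
    rw [Finsupp.sum_of_support_subset γ.coeff
      (s := Finset.univ.image fun g : Fin N × Bool => FreeGroup.mk [g]) ?hsub F
      (fun i _ => hF i), Finset.sum_image fun g _ g' _ h => hmkinj g g' h]
    case hsub =>
      intro v hv
      rw [Finsupp.mem_support_iff] at hv
      have hlen : v.toWord.length = 1 := by
        by_contra h
        exact hv (hγ v h)
      obtain ⟨g, hg⟩ := List.length_eq_one_iff.mp hlen
      rw [Finset.mem_image]
      exact ⟨g, Finset.mem_univ g, by rw [← hg, mk_toWord]⟩
  have hchisingle : ∀ g : Fin N × Bool, (chi 1).coeff (FreeGroup.mk [g]) = 1 := by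
    intro g
    rw [hchi, if_pos (by rw [hsingle]; rfl)]
  have hc0 : ∑ g : Fin N × Bool, cc g = 0 := by
    have h0 := hβorth
    rw [hsum1 β hβlen (fun w a => a * (starRingEnd ℂ) ((chi 1).coeff w)) (fun w => zero_mul _)] at h0
    calc ∑ g : Fin N × Bool, cc g
        = ∑ g : Fin N × Bool, β.coeff (FreeGroup.mk [g]) * (starRingEnd ℂ) ((chi 1).coeff (FreeGroup.mk [g])) := by
          refine Finset.sum_congr rfl fun g _ => ?_
          rw [hchisingle, _root_.map_one, mul_one]
      _ = 0 := h0
  have hc'0 : ∑ g : Fin N × Bool, cc' g = 0 := by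
    have h0 := hβ'orth
    rw [hsum1 β' hβ'len (fun w a => a * (starRingEnd ℂ) ((chi 1).coeff w)) (fun w => zero_mul _)] at h0
    calc ∑ g : Fin N × Bool, cc' g
        = ∑ g : Fin N × Bool, β'.coeff (FreeGroup.mk [g]) * (starRingEnd ℂ) ((chi 1).coeff (FreeGroup.mk [g])) := by
          refine Finset.sum_congr rfl fun g _ => ?_
          rw [hchisingle, _root_.map_one, mul_one]
      _ = 0 := h0
  have hinvsingle : ∀ g : Fin N × Bool,
      (FreeGroup.mk [(g.1, !g.2)] : FreeGroup (Fin N))⁻¹ = FreeGroup.mk [g] := by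
    intro g
    rw [inv_mk]
    congr 1
    simp [FreeGroup.invRev]
  have hccsym : ∀ g : Fin N × Bool, cc (g.1, !g.2) = (ε:ℂ) * cc g := by
    intro g
    have h1 := hβsym (FreeGroup.mk [(g.1, !g.2)])
    rw [hinvsingle] at h1
    exact h1
  have hcc'sym : ∀ g : Fin N × Bool, cc' (g.1, !g.2) = (ε':ℂ) * cc' g := by
    intro g
    have h1 := hβ'sym (FreeGroup.mk [(g.1, !g.2)])
    rw [hinvsingle] at h1
    exact h1
  have hddsym : ∀ g : Fin N × Bool, dd (g.1, !g.2) = (ε':ℂ) * dd g := by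
    intro g
    rw [hdd]
    simp only
    rw [hcc'sym, _root_.map_mul, Complex.conj_ofReal]
  have hBval : ∀ w : FreeGroup (Fin N),
      (B n m).coeff w = if w.toWord.length = n + m + 1 then cc (w.toWord.getD n x₀) else 0 := by
    intro w
    rw [hB n m, hq]
    split_ifs with h
    · rw [middle_apply x₀ chi hchi β hβlen n m w h]
    · rfl
  have hB'val : ∀ w : FreeGroup (Fin N),
      (B' n' m').coeff w = if w.toWord.length = n' + m' + 1 then cc' (w.toWord.getD n' x₀) else 0 := by
    intro w
    rw [hB' n' m', hq]
    split_ifs with h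
    · rw [middle_apply x₀ chi hchi β' hβ'len n' m' w h]
    · rfl
  set ip : ℂ := ∑ g : Fin N × Bool, cc g * dd g with hip
  have hipeq : (β.coeff.sum fun w a => a * (starRingEnd ℂ) (β'.coeff w)) = ip := by
    rw [hsum1 β hβlen (fun w a => a * (starRingEnd ℂ) (β'.coeff w)) (fun w => zero_mul _)]
  have hipz : ε ≠ ε' → ip = 0 := by
    intro hee
    have hσ : ∀ g : Fin N × Bool,
        cc (g.1, !g.2) * dd (g.1, !g.2) = ((ε:ℂ) * ε') * (cc g * dd g) := by
      intro g
      rw [hccsym, hddsym]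
      ring
    have h2 : ip = ((ε:ℂ) * ε') * ip := by
      calc ip = ∑ g : Fin N × Bool, cc (g.1, !g.2) * dd (g.1, !g.2) := by
            refine (Fintype.sum_equiv
              (Equiv.mk (fun g : Fin N × Bool => (g.1, !g.2)) (fun g => (g.1, !g.2))
                (fun g => by simp) (fun g => by simp))
              _ _ fun g => ?_).symm
            rfl
        _ = ((ε:ℂ) * ε') * ip := by
            rw [Finset.sum_congr rfl fun g _ => hσ g, ← Finset.mul_sum]
    have hne : (ε:ℂ) * ε' = -1 := by
      rcases hε with rfl | rfl <;> rcases hε' with rfl | rfl <;> first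
        | (exact absurd rfl hee)
        | norm_num
    rw [hne] at h2
    linear_combination h2 / 2
  have hLHS : ((B n m).coeff.sum fun w a => a * (starRingEnd ℂ) ((B' n' m').coeff w))
      = ∑ l ∈ RWs N (n+m+1),
          cc (l.getD n x₀) * (starRingEnd ℂ) ((B' n' m').coeff (FreeGroup.mk l)) := by
    rw [Finsupp.sum_of_support_subset (B n m).coeff
      (s := (RWs N (n+m+1)).image FreeGroup.mk) ?hsub2
      (fun w a => a * (starRingEnd ℂ) ((B' n' m').coeff w)) (fun i _ => zero_mul _),
      Finset.sum_image ?hinj2]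
    · refine Finset.sum_congr rfl fun l hl => ?_
      rw [mem_RWs] at hl
      rw [hBval, toWord_mk_of_chain hl.2, if_pos hl.1]
    case hinj2 =>
      intro l hl l' hl' h
      rw [Finset.mem_coe, mem_RWs] at hl hl'
      have := congrArg FreeGroup.toWord h
      rwa [toWord_mk_of_chain hl.2, toWord_mk_of_chain hl'.2] at this
    case hsub2 =>
      intro v hv
      rw [Finsupp.mem_support_iff] at hv
      rw [hBval] at hv
      have hlen : v.toWord.length = n + m + 1 := by
        by_contra h
        rw [if_neg h] at hv
        exact hv rfl
      rw [Finset.mem_image]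
      exact ⟨v.toWord, mem_RWs.mpr ⟨hlen, chain'_toWord v⟩, mk_toWord⟩
  rw [hLHS, hipeq]
  by_cases hnm : n + m = n' + m'
  · have hL2 : ∀ l ∈ RWs N (n+m+1),
        cc (l.getD n x₀) * (starRingEnd ℂ) ((B' n' m').coeff (FreeGroup.mk l))
          = cc (l.getD n x₀) * dd (l.getD n' x₀) := by
      intro l hl
      rw [mem_RWs] at hl
      rw [hB'val, toWord_mk_of_chain hl.2, if_pos (by omega)]
    rw [Finset.sum_congr rfl hL2, if_pos hnm]
    rcases le_or_gt n n' with hle | hlt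
    · have habs : -|(n:ℤ) - (n':ℤ)| = -(((n' - n : ℕ) : ℤ)) := by
        rw [abs_sub_comm, abs_of_nonneg (by push_cast; omega)]
        push_cast
        omega
      rw [habs]
      have hsum : ∑ l ∈ RWs N (n+m+1), cc (l.getD n x₀) * dd (l.getD n' x₀)
          = Tsum N x₀ cc dd n (n' - n) m' := by
        unfold Tsum
        rw [show n + (n' - n) + 1 + m' = n + m + 1 from by omega]
        refine Finset.sum_congr rfl fun l _ => ?_
        rw [show n + (n' - n) = n' from by omega]
      rw [hsum, Tsum_eval x₀ cc dd hN0 hc0 (ε:ℂ) hccsym]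
      exact finisher hN ε ε' hε ip hipz (n' - n) (n + m') (n + m) (by omega)
    · have habs : -|(n:ℤ) - (n':ℤ)| = -(((n - n' : ℕ) : ℤ)) := by
        rw [abs_of_nonneg (by push_cast; omega)]
        push_cast
        omega
      rw [habs]
      have hsum : ∑ l ∈ RWs N (n+m+1), cc (l.getD n x₀) * dd (l.getD n' x₀)
          = Tsum N x₀ cc dd m (n - n') n' := by
        rw [← Tsum_swap x₀ cc dd n' (n - n') m]
        rw [show n' + (n - n') + 1 + m = n + m + 1 from by omega]
        refine Finset.sum_congr rfl fun l _ => ?_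
        rw [show n' + (n - n') = n from by omega]
      rw [hsum, Tsum_eval x₀ cc dd hN0 hc0 (ε:ℂ) hccsym]
      exact finisher hN ε ε' hε ip hipz (n - n') (m + n') (n + m) (by omega)
  · have hzero : ∀ l ∈ RWs N (n+m+1),
        cc (l.getD n x₀) * (starRingEnd ℂ) ((B' n' m').coeff (FreeGroup.mk l)) = 0 := by
      intro l hl
      rw [mem_RWs] at hl
      rw [hB'val, toWord_mk_of_chain hl.2, if_neg (by omega), map_zero, mul_zero]
    rw [Finset.sum_congr rfl hzero, Finset.sum_const_zero, if_neg hnm]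
    ring
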